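/- Let 𝒜 and ℬ be two finite σ-structures. The following are equivalent: (i) 𝒜 and ℬ are homomorphically equivalent; (ii) 𝒜 and ℬ satisfy exactly the same {∃,∧}-FO sentences; (iii) 𝒜 and ℬ satisfy exactly the same {∃,∧,=}-FO sentences; (iv) 𝒜 and ℬ satisfy exactly the same {∃,∧,∨}-FO sentences; (v) 𝒜 and ℬ satisfy exactly the same {∃,∧,∨,=}-FO sentences. -/

import Mathlib

namespace MC

/-- Which logical symbols (beyond ∃, ∧ and relational atoms) are allowed. -/
structure Frag where
  eq : Bool
  ne : Bool
  neg : Bool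
  orF : Bool
  allF : Bool

/-- Formulas over a relational signature `σ` (with arities `ar`) in the syntactic
fragment `F`, with `n` free variables (de Bruijn style, quantifiers bind the last
variable). Atomic relational formulas, conjunction and existential quantification
are always allowed; the other symbols only if enabled in `F`. -/
inductive Fml (σ : Type) (ar : σ → ℕ) (F : Frag) : ℕ → Type
  | rel {n : ℕ} (r : σ) (v : Fin (ar r) → Fin n) : Fml σ ar F n
  | equal {n : ℕ} (h : F.eq = true) (i j : Fin n) : Fml σ ar F n
  | nequal {n : ℕ} (h : F.ne = true) (i j : Fin n) : Fml σ ar F n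
  | fnot {n : ℕ} (h : F.neg = true) (φ : Fml σ ar F n) : Fml σ ar F n
  | fand {n : ℕ} (φ ψ : Fml σ ar F n) : Fml σ ar F n
  | forr {n : ℕ} (h : F.orF = true) (φ ψ : Fml σ ar F n) : Fml σ ar F n
  | fex {n : ℕ} (φ : Fml σ ar F (n + 1)) : Fml σ ar F n
  | fall {n : ℕ} (h : F.allF = true) (φ : Fml σ ar F (n + 1)) : Fml σ ar F n

/-- Satisfaction of a formula in a structure with domain `A` and
interpretation `I`, under a valuation of the free variables. -/
def Sat {σ : Type} {ar : σ → ℕ} {F : Frag} {A : Type}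
    (I : ∀ r : σ, (Fin (ar r) → A) → Prop) :
    ∀ {n : ℕ}, Fml σ ar F n → (Fin n → A) → Prop
  | _, .rel r v, val => I r fun i => val (v i)
  | _, .equal _ i j, val => val i = val j
  | _, .nequal _ i j, val => val i ≠ val j
  | _, .fnot _ φ, val => ¬ Sat I φ val
  | _, .fand φ ψ, val => Sat I φ val ∧ Sat I ψ val
  | _, .forr _ φ ψ, val => Sat I φ val ∨ Sat I ψ val
  | _, .fex φ, val => ∃ a : A, Sat I φ (Fin.snoc val a)
  | _, .fall _ φ, val => ∀ a : A, Sat I φ (Fin.snoc val a)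

end MC

namespace MC

/-- `h : A → B` is a homomorphism between the structures `(A, IA)` and `(B, IB)`. -/
def IsHom {σ : Type} {ar : σ → ℕ} {A B : Type}
    (IA : ∀ r : σ, (Fin (ar r) → A) → Prop)
    (IB : ∀ r : σ, (Fin (ar r) → B) → Prop) (h : A → B) : Prop :=
  ∀ (r : σ) (t : Fin (ar r) → A), IA r t → IB r fun i => h (t i)

/-- The fragment {∃,∧}-FO. -/
def ppFrag : Frag := ⟨false, false, false, false, false⟩
/-- The fragment {∃,∧,=}-FO. -/
def ppEqFrag : Frag := ⟨true, false, false, false, false⟩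
/-- The fragment {∃,∧,∨}-FO. -/
def ppOrFrag : Frag := ⟨false, false, false, true, false⟩
/-- The fragment {∃,∧,∨,=}-FO. -/
def ppOrEqFrag : Frag := ⟨true, false, false, true, false⟩

section Aux

variable {σ : Type} {ar : σ → ℕ}

/-- Lift a pp formula into any fragment. -/
def liftF {F : Frag} : ∀ {n}, Fml σ ar ppFrag n → Fml σ ar F n
  | _, .rel r v => .rel r v
  | _, .equal h _ _ => absurd h (by simp [ppFrag])
  | _, .nequal h _ _ => absurd h (by simp [ppFrag])
  | _, .fnot h _ => absurd h (by simp [ppFrag])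
  | _, .fand φ ψ => .fand (liftF φ) (liftF ψ)
  | _, .forr h _ _ => absurd h (by simp [ppFrag])
  | _, .fex φ => .fex (liftF φ)
  | _, .fall h _ => absurd h (by simp [ppFrag])

lemma Sat_liftF {F : Frag} {A : Type} (I : ∀ r : σ, (Fin (ar r) → A) → Prop) :
    ∀ {n} (φ : Fml σ ar ppFrag n) (val : Fin n → A),
      Sat I (liftF (F := F) φ) val ↔ Sat I φ val
  | _, .rel r v, val => Iff.rfl
  | _, .equal h _ _, _ => absurd h (by simp [ppFrag])
  | _, .nequal h _ _, _ => absurd h (by simp [ppFrag])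
  | _, .fnot h _, _ => absurd h (by simp [ppFrag])
  | _, .fand φ ψ, val => by
      simp only [liftF, Sat, Sat_liftF I φ val, Sat_liftF I ψ val]
  | _, .forr h _ _, _ => absurd h (by simp [ppFrag])
  | _, .fex φ, val => by
      simp only [liftF, Sat]
      exact exists_congr fun a => Sat_liftF I φ _
  | _, .fall h _, _ => absurd h (by simp [ppFrag])

/-- Close a formula by existentially quantifying all free variables. -/
def exN : ∀ n, Fml σ ar ppFrag n → Fml σ ar ppFrag 0
  | 0, φ => φ
  | n + 1, φ => exN n (.fex φ)

lemma Sat_exN {A : Type} (I : ∀ r : σ, (Fin (ar r) → A) → Prop) :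
    ∀ (n) (φ : Fml σ ar ppFrag n),
      Sat I (exN n φ) Fin.elim0 ↔ ∃ val : Fin n → A, Sat I φ val
  | 0, φ => by
      constructor
      · intro h; exact ⟨Fin.elim0, h⟩
      · rintro ⟨val, h⟩
        have hv : val = Fin.elim0 := funext fun i => i.elim0
        rwa [hv] at h
  | n + 1, φ => by
      rw [exN, Sat_exN I n]
      constructor
      · rintro ⟨val, a, h⟩; exact ⟨Fin.snoc val a, h⟩
      · rintro ⟨val, h⟩
        refine ⟨Fin.init val, val (Fin.last n), ?_⟩
        rwa [Fin.snoc_init_self]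

/-- Conjunction of a nonempty list of formulas. -/
def conjL {n : ℕ} : Fml σ ar ppFrag n → List (Fml σ ar ppFrag n) → Fml σ ar ppFrag n
  | φ, [] => φ
  | φ, ψ :: L => .fand ψ (conjL φ L)

lemma Sat_conjL {A : Type} (I : ∀ r : σ, (Fin (ar r) → A) → Prop) {n : ℕ}
    (φ : Fml σ ar ppFrag n) (L : List (Fml σ ar ppFrag n)) (val : Fin n → A) :
    Sat I (conjL φ L) val ↔ Sat I φ val ∧ ∀ ψ ∈ L, Sat I ψ val := by
  induction L with
  | nil => simp [conjL]
  | cons ψ L ih => simp [conjL, Sat, ih]; tauto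

/-- Homomorphisms preserve formulas without ≠, ¬, ∀. -/
lemma sat_of_hom {F : Frag} (hne : F.ne = false) (hneg : F.neg = false)
    (hall : F.allF = false) {A B : Type}
    {IA : ∀ r : σ, (Fin (ar r) → A) → Prop}
    {IB : ∀ r : σ, (Fin (ar r) → B) → Prop}
    (h : A → B) (hh : IsHom IA IB h) :
    ∀ {n} (φ : Fml σ ar F n) (val : Fin n → A),
      Sat IA φ val → Sat IB φ (fun i => h (val i))
  | _, .rel r v, val, hs => hh r (fun i => val (v i)) hs
  | _, .equal _ i j, val, hs => congrArg h hs
  | _, .nequal he _ _, _, _ => absurd he (by simp [hne])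
  | _, .fnot he _, _, _ => absurd he (by simp [hneg])
  | _, .fand φ ψ, val, hs =>
      ⟨sat_of_hom hne hneg hall h hh φ val hs.1, sat_of_hom hne hneg hall h hh ψ val hs.2⟩
  | _, .forr _ φ ψ, val, hs =>
      hs.imp (sat_of_hom hne hneg hall h hh φ val) (sat_of_hom hne hneg hall h hh ψ val)
  | _, .fex φ, val, hex => by
      obtain ⟨a, hs⟩ : ∃ a, Sat IA φ (Fin.snoc val a) := hex
      refine ⟨h a, ?_⟩
      have := sat_of_hom hne hneg hall h hh φ (Fin.snoc val a) hs
      have he : (fun i => h ((Fin.snoc val a : Fin _ → A) i))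
          = (Fin.snoc (fun i => h (val i)) (h a) : Fin _ → B) := by
        funext i
        refine Fin.lastCases ?_ ?_ i <;> simp
      rwa [he] at this
  | _, .fall he _, _, _ => absurd he (by simp [hall])

/-- From one-directional agreement on pp sentences, extract a homomorphism. -/
lemma exists_hom [Finite σ] {A B : Type} [Finite A] [Finite B] [Nonempty A] [Nonempty B]
    (IA : ∀ r : σ, (Fin (ar r) → A) → Prop)
    (IB : ∀ r : σ, (Fin (ar r) → B) → Prop)
    (hAB : ∀ φ : Fml σ ar ppFrag 0, Sat IA φ Fin.elim0 → Sat IB φ Fin.elim0) :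
    ∃ h : A → B, IsHom IA IB h := by
  classical
  cases nonempty_fintype A
  set n := Fintype.card A with hn
  let e : A ≃ Fin n := Fintype.equivFin A
  cases nonempty_fintype (Σ r : σ, Fin (ar r) → A)
  let L : List (Σ r : σ, Fin (ar r) → A) :=
    (Finset.univ.filter fun p : Σ r : σ, Fin (ar r) → A => IA p.1 p.2).toList
  have hmemL : ∀ p : Σ r : σ, Fin (ar r) → A, p ∈ L ↔ IA p.1 p.2 := by
    intro p; simp [L]
  let atom : (Σ r : σ, Fin (ar r) → A) → Fml σ ar ppFrag n :=
    fun p => .rel p.1 fun i => e (p.2 i)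
  have hatom : ∀ (X : Type) (I : ∀ r : σ, (Fin (ar r) → X) → Prop)
      (p : Σ r : σ, Fin (ar r) → A) (val : Fin n → X),
      Sat I (atom p) val ↔ I p.1 fun i => val (e (p.2 i)) := fun _ _ _ _ => Iff.rfl
  rcases hLc : L with _ | ⟨p, L'⟩
  · refine ⟨fun _ => Classical.arbitrary B, fun r t ht => ?_⟩
    have := (hmemL ⟨r, t⟩).2 ht
    rw [hLc] at this
    simp at this
  · -- canonical conjunctive query
    set φ₀ : Fml σ ar ppFrag n := conjL (atom p) (L'.map atom) with hφ₀
    have hsatA : Sat IA (exN n φ₀) Fin.elim0 := by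
      rw [Sat_exN]
      refine ⟨fun i => e.symm i, ?_⟩
      rw [hφ₀, Sat_conjL]
      have key : ∀ q : Σ r : σ, Fin (ar r) → A, q ∈ L →
          Sat IA (atom q) fun i => e.symm i := by
        intro q hq
        rw [hatom]
        simpa using (hmemL q).1 hq
      constructor
      · exact key p (by rw [hLc]; exact List.mem_cons_self)
      · intro ψ hψ
        rcases List.mem_map.1 hψ with ⟨q, hq, rfl⟩
        exact key q (by rw [hLc]; exact List.mem_cons_of_mem _ hq)
    have hsatB := hAB _ hsatA
    rw [Sat_exN] at hsatB
    obtain ⟨val, hval⟩ := hsatB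
    rw [hφ₀, Sat_conjL] at hval
    refine ⟨fun a => val (e a), fun r t ht => ?_⟩
    have hmem : (⟨r, t⟩ : Σ r : σ, Fin (ar r) → A) ∈ L := (hmemL ⟨r, t⟩).2 ht
    rw [hLc] at hmem
    rcases List.mem_cons.1 hmem with hmem | hmem
    · have := hval.1
      rw [← hmem] at this
      exact (hatom B IB ⟨r, t⟩ val).1 this
    · have := hval.2 (atom ⟨r, t⟩) (List.mem_map.2 ⟨_, hmem, rfl⟩)
      exact (hatom B IB ⟨r, t⟩ val).1 this

/-- The equivalence, for any fragment without ≠, ¬, ∀. -/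
lemma homEquiv_iff_frag [Finite σ] {F : Frag} (hne : F.ne = false) (hneg : F.neg = false)
    (hall : F.allF = false) {A B : Type} [Finite A] [Finite B] [Nonempty A] [Nonempty B]
    (IA : ∀ r : σ, (Fin (ar r) → A) → Prop)
    (IB : ∀ r : σ, (Fin (ar r) → B) → Prop) :
    ((∃ h : A → B, IsHom IA IB h) ∧ (∃ h : B → A, IsHom IB IA h)) ↔
      ∀ φ : Fml σ ar F 0, Sat IA φ Fin.elim0 ↔ Sat IB φ Fin.elim0 := by
  constructor
  · rintro ⟨⟨f, hf⟩, ⟨g, hg⟩⟩ φ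
    constructor
    · intro hs
      have := sat_of_hom hne hneg hall f hf φ Fin.elim0 hs
      rwa [show (fun i => f (Fin.elim0 i)) = (Fin.elim0 : Fin 0 → B) from
        funext fun i => i.elim0] at this
    · intro hs
      have := sat_of_hom hne hneg hall g hg φ Fin.elim0 hs
      rwa [show (fun i => g (Fin.elim0 i)) = (Fin.elim0 : Fin 0 → A) from
        funext fun i => i.elim0] at this
  · intro hsent
    constructor
    · refine exists_hom IA IB fun φ hs => ?_
      exact (Sat_liftF IB φ _).1 ((hsent (liftF φ)).1 ((Sat_liftF IA φ _).2 hs))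
    · refine exists_hom IB IA fun φ hs => ?_
      exact (Sat_liftF IA φ _).1 ((hsent (liftF φ)).2 ((Sat_liftF IB φ _).2 hs))

end Aux

/-- Homomorphic equivalence of 𝒜 and ℬ is equivalent to agreement on all
sentences of each of the fragments {∃,∧}, {∃,∧,=}, {∃,∧,∨} and {∃,∧,∨,=}. -/
theorem homEquiv_iff_sentence_equivalences {σ : Type} [Finite σ] (ar : σ → ℕ)
    {A B : Type} [Finite A] [Finite B] [Nonempty A] [Nonempty B]
    (IA : ∀ r : σ, (Fin (ar r) → A) → Prop)
    (IB : ∀ r : σ, (Fin (ar r) → B) → Prop) :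
    (((∃ h : A → B, IsHom IA IB h) ∧ (∃ h : B → A, IsHom IB IA h)) ↔
        ∀ φ : Fml σ ar ppFrag 0, Sat IA φ Fin.elim0 ↔ Sat IB φ Fin.elim0) ∧
    (((∃ h : A → B, IsHom IA IB h) ∧ (∃ h : B → A, IsHom IB IA h)) ↔
        ∀ φ : Fml σ ar ppEqFrag 0, Sat IA φ Fin.elim0 ↔ Sat IB φ Fin.elim0) ∧
    (((∃ h : A → B, IsHom IA IB h) ∧ (∃ h : B → A, IsHom IB IA h)) ↔
        ∀ φ : Fml σ ar ppOrFrag 0, Sat IA φ Fin.elim0 ↔ Sat IB φ Fin.elim0) ∧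
    (((∃ h : A → B, IsHom IA IB h) ∧ (∃ h : B → A, IsHom IB IA h)) ↔
        ∀ φ : Fml σ ar ppOrEqFrag 0, Sat IA φ Fin.elim0 ↔ Sat IB φ Fin.elim0) := by
  exact ⟨homEquiv_iff_frag rfl rfl rfl IA IB, homEquiv_iff_frag rfl rfl rfl IA IB,
    homEquiv_iff_frag rfl rfl rfl IA IB, homEquiv_iff_frag rfl rfl rfl IA IB⟩

end MC
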